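/- Let v ∈ F⁴ be nonzero. Then Δ(v) = 0 if and only if there exist two F-linearly independent Σ-vectors u, w with v ∈ span_F{u, w} such that the number of one-dimensional 𝔽_q-subspaces ⟨(s,t)⟩ of 𝔽_q² with Q(su + tw) = 0 is equal to 1 or to q+1. (That is, the variety Δ = 0 consists exactly of the points lying on an extended tangent line or an extended generator of the subquadric Q₀ of the Baer subgeometry Σ.) -/

import Mathlib

/-- `Q(α,β,γ,δ) = αδ - βγ`, the quadratic form of the hyperbolic quadric. -/
def Qf {F : Type*} [Field F] (v : Fin 4 → F) : F := v 0 * v 3 - v 1 * v 2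

/-- `H(α,β,γ,δ) = α^{q+1} - β^{q+1} - γ^{q+1} + δ^{q+1}`, the Hermitian form. -/
def Hf (q : ℕ) {F : Type*} [Field F] (v : Fin 4 → F) : F :=
  v 0 ^ (q + 1) - v 1 ^ (q + 1) - v 2 ^ (q + 1) + v 3 ^ (q + 1)

/-- `v = (α,β,γ,δ)` is nonsingular if `(αz + δ^q z^q)x + (γz + β^q z^q)x^q ≠ 0`
for all nonzero `x, z`. -/
def Nonsingular (q : ℕ) {F : Type*} [Field F] (v : Fin 4 → F) : Prop :=
  ∀ x z : F, x ≠ 0 → z ≠ 0 →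
    (v 0 * z + v 3 ^ q * z ^ q) * x + (v 2 * z + v 1 ^ q * z ^ q) * x ^ q ≠ 0

/-- `Δ(v) = H(v)² - 4·Q(v)^{q+1}`. -/
def Deltaf (q : ℕ) {F : Type*} [Field F] (v : Fin 4 → F) : F :=
  Hf q v ^ 2 - 4 * Qf v ^ (q + 1)

/-- A Σ-vector: a nonzero vector of the form `(α, β, β^q, α^q)`. -/
def IsSigmaVec (q : ℕ) {F : Type*} [Field F] (v : Fin 4 → F) : Prop :=
  v ≠ 0 ∧ ∃ α β : F, v = ![α, β, β ^ q, α ^ q]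

/-- The sesquilinear form `h(u,v) = u₁v₁^q - u₂v₂^q - u₃v₃^q + u₄v₄^q`. -/
def hForm (q : ℕ) {F : Type*} [Field F] (u v : Fin 4 → F) : F :=
  u 0 * v 0 ^ q - u 1 * v 1 ^ q - u 2 * v 2 ^ q + u 3 * v 3 ^ q

/-- The one-dimensional `F`-subspace (as a set) spanned by `v`. -/
def Fline {F : Type*} [Field F] (v : Fin 4 → F) : Set (Fin 4 → F) :=
  {x | ∃ a : F, x = a • v}

/-- The number of one-dimensional `𝔽_q`-subspaces `⟨(s,t)⟩` of `𝔽_q²` with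
`Q(s·u + t·w) = 0`. -/
noncomputable def tangentCount (q : ℕ) {F : Type*} [Field F] (u w : Fin 4 → F) : ℕ :=
  Set.ncard {L : Set (F × F) | ∃ s t : F, s ^ q = s ∧ t ^ q = t ∧ (s, t) ≠ (0, 0) ∧
    Qf (fun i => s * u i + t * w i) = 0 ∧
    L = {p : F × F | ∃ e : F, e ^ q = e ∧ p = (e * s, e * t)}}

/-- `Z₁`: the set of `ξ ∉ {0, 1, -1}` such that `1 - ξ⁻²` is a nonzero square of `𝔽_q`. -/
def Zone (q : ℕ) (F : Type*) [Field F] : Set F :=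
  {ξ | ξ ≠ 0 ∧ ξ ≠ 1 ∧ ξ ≠ -1 ∧ ∃ s : F, s ^ q = s ∧ s ≠ 0 ∧ 1 - (ξ ^ 2)⁻¹ = s ^ 2}

/-- `Z₂`: the set of `ξ ≠ 0` such that `1 - ξ⁻²` is a nonzero nonsquare of `𝔽_q`. -/
def Ztwo (q : ℕ) (F : Type*) [Field F] : Set F :=
  {ξ | ξ ≠ 0 ∧ (1 - (ξ ^ 2)⁻¹) ^ q = 1 - (ξ ^ 2)⁻¹ ∧ 1 - (ξ ^ 2)⁻¹ ≠ 0 ∧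
    ¬∃ s : F, s ^ q = s ∧ 1 - (ξ ^ 2)⁻¹ = s ^ 2}

/-! ### Auxiliary machinery -/

open Polynomial

/-- The polar form of `Qf`. -/
def Bf {F : Type*} [Field F] (u w : Fin 4 → F) : F :=
  u 0 * w 3 + u 3 * w 0 - u 1 * w 2 - u 2 * w 1

/-- The `𝔽_q`-line through `(s,t)`. -/
def lineOf (q : ℕ) {F : Type*} [Field F] (s t : F) : Set (F × F) :=
  {p : F × F | ∃ e : F, e ^ q = e ∧ p = (e * s, e * t)}

/-- The set of lines counted by `tangentCount`. -/
def ZS (q : ℕ) {F : Type*} [Field F] (u w : Fin 4 → F) : Set (Set (F × F)) :=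
  {L | ∃ s t : F, s ^ q = s ∧ t ^ q = t ∧ (s, t) ≠ (0, 0) ∧
    Qf (fun i => s * u i + t * w i) = 0 ∧ L = lineOf q s t}

theorem tangentCount_eq_ZS (q : ℕ) {F : Type*} [Field F] (u w : Fin 4 → F) :
    tangentCount q u w = (ZS q u w).ncard := rfl

theorem Qf_comb {F : Type*} [Field F] (u w : Fin 4 → F) (s t : F) :
    Qf (fun i => s * u i + t * w i) = s ^ 2 * Qf u + s * t * Bf u w + t ^ 2 * Qf w := by
  simp only [Qf, Bf]; ring

section Lines

variable (q : ℕ) {F : Type*} [Field F]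

theorem lineOf_norm {s t : F} (hs : s ^ q = s) (ht : t ^ q = t) (ht0 : t ≠ 0) :
    lineOf q s t = lineOf q (s * t⁻¹) 1 := by
  ext p
  constructor
  · rintro ⟨e, he, rfl⟩
    refine ⟨e * t, by rw [mul_pow, he, ht], ?_⟩
    simp only [Prod.mk.injEq, mul_one]
    refine ⟨by field_simp, trivial⟩
  · rintro ⟨e, he, rfl⟩
    refine ⟨e * t⁻¹, by rw [mul_pow, inv_pow, ht, he], ?_⟩
    simp only [Prod.mk.injEq, mul_one]
    refine ⟨by field_simp, by field_simp⟩

theorem lineOf_inf {s : F} (hs : s ^ q = s) (hs0 : s ≠ 0) :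
    lineOf q s 0 = lineOf q 1 0 := by
  ext p
  constructor
  · rintro ⟨e, he, rfl⟩
    exact ⟨e * s, by rw [mul_pow, he, hs], by simp⟩
  · rintro ⟨e, he, rfl⟩
    exact ⟨e * s⁻¹, by rw [mul_pow, inv_pow, hs, he], by simp; field_simp⟩

theorem lineOf_one_inj {s s' : F} (h : lineOf q s 1 = lineOf q s' 1) : s = s' := by
  have hm : (s, (1:F)) ∈ lineOf q s 1 := ⟨1, one_pow q, by simp⟩
  rw [h] at hm
  obtain ⟨e, _, hp⟩ := hm
  simp only [Prod.mk.injEq, mul_one] at hp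
  obtain ⟨h1, h2⟩ := hp
  rw [← h2, one_mul] at h1
  exact h1

theorem lineOf_one_ne_inf (s : F) : lineOf q s 1 ≠ lineOf q 1 0 := by
  intro h
  have hm : (s, (1:F)) ∈ lineOf q s 1 := ⟨1, one_pow q, by simp⟩
  rw [h] at hm
  obtain ⟨e, _, hp⟩ := hm
  simp only [Prod.mk.injEq, mul_zero, mul_one] at hp
  exact one_ne_zero hp.2

end Lines

section Basics

/-- Upper bound on solutions of `x ^ q = c * x`. -/
theorem card_pow_eq_le (q : ℕ) (hq3 : 3 ≤ q) {F : Type*} [Field F] [Fintype F] (c : F) :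
    Set.ncard {x : F | x ^ q = c * x} ≤ q := by
  classical
  have hsub : {x : F | x ^ q = c * x} ⊆
      insert (0 : F) ((nthRoots (q - 1) c).toFinset : Set F) := by
    intro x hx
    rcases eq_or_ne x 0 with rfl | hx0
    · exact Set.mem_insert _ _
    · refine Set.mem_insert_of_mem _ ?_
      simp only [Finset.coe_sort_coe, Multiset.mem_toFinset, Finset.mem_coe]
      rw [mem_nthRoots (by omega)]
      have h1 : x ^ (q - 1) * x = c * x := by
        rw [← pow_succ]
        have h2 : q - 1 + 1 = q := by omega
        rw [h2]; exact hx
      exact mul_right_cancel₀ hx0 h1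
  calc Set.ncard {x : F | x ^ q = c * x} ≤ Set.ncard
        (insert (0 : F) ((nthRoots (q - 1) c).toFinset : Set F)) :=
        Set.ncard_le_ncard hsub (Set.toFinite _)
    _ ≤ Set.ncard ((nthRoots (q - 1) c).toFinset : Set F) + 1 := Set.ncard_insert_le _ _
    _ ≤ (q - 1) + 1 := by
        gcongr
        rw [Set.ncard_coe_finset]
        exact le_trans (Multiset.toFinset_card_le _) (card_nthRoots _ _)
    _ = q := by omega

theorem basics (q : ℕ) (hq : ∃ p k : ℕ, p.Prime ∧ 0 < k ∧ q = p ^ k) (hodd : Odd q)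
    (F : Type*) [Field F] [Fintype F] (hF : Fintype.card F = q ^ 2) :
    (∀ x y : F, (x + y) ^ q = x ^ q + y ^ q) ∧ ((2 : F) ≠ 0) ∧ 3 ≤ q := by
  obtain ⟨p, k, hp, hk, rfl⟩ := hq
  have hp2 : p ≠ 2 := by
    intro h
    rw [h] at hodd
    exact (Nat.not_odd_iff_even.2 (Nat.even_pow.2 ⟨even_two, Nat.pos_iff_ne_zero.1 hk⟩)) hodd
  have hchar : CharP F p := by
    obtain ⟨n, hr, hcard⟩ := FiniteField.card F (ringChar F)
    have hrp : ringChar F = p := by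
      have hdvd : ringChar F ∣ (p ^ k) ^ 2 := by
        rw [← hF, hcard]
        exact dvd_pow_self _ (by positivity)
      rw [← pow_mul] at hdvd
      exact (Nat.prime_dvd_prime_iff_eq hr hp).1 (hr.dvd_of_dvd_pow hdvd)
    rw [← hrp]; infer_instance
  haveI := hchar
  haveI : ExpChar F p := ExpChar.prime hp
  refine ⟨fun x y => add_pow_expChar_pow x y p k, ?_, ?_⟩
  · have hnd : ¬ (p ∣ 2) := fun h => hp2 ((Nat.prime_dvd_prime_iff_eq hp Nat.prime_two).1 h)
    exact fun h => hnd ((CharP.cast_eq_zero_iff F p 2).1 (by exact_mod_cast h))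
  · have h3 : 3 ≤ p := by
      rcases Nat.lt_or_ge p 3 with h | h
      · interval_cases p
        · exact absurd rfl hp.ne_zero
        · exact absurd rfl hp.ne_one
        · exact absurd rfl hp2
      · exact h
    calc 3 ≤ p := h3
    _ ≤ p ^ k := Nat.le_self_pow (Nat.pos_iff_ne_zero.1 hk) p

theorem qq_fix (q : ℕ) {F : Type*} [Field F] [Fintype F] (hF : Fintype.card F = q ^ 2)
    (x : F) : (x ^ q) ^ q = x := by
  rw [← pow_mul, ← sq, ← hF, FiniteField.pow_card]

theorem card_K (q : ℕ) (hq3 : 3 ≤ q) {F : Type*} [Field F] [Fintype F]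
    (hF : Fintype.card F = q ^ 2)
    (hadd : ∀ x y : F, (x + y) ^ q = x ^ q + y ^ q) :
    Set.ncard {x : F | x ^ q = x} = q := by
  classical
  have hub : Set.ncard {x : F | x ^ q = x} ≤ q := by
    simpa using card_pow_eq_le q hq3 (1 : F)
  have hker : Set.ncard {x : F | x ^ q = -x} ≤ q := by
    simpa using card_pow_eq_le q hq3 (-1 : F)
  let T : F →+ F :=
    { toFun := fun x => x + x ^ q
      map_zero' := by simp [zero_pow (by omega : q ≠ 0)]
      map_add' := by intro a b; simp only [hadd]; ring }
  have hrange : (Set.range T) ⊆ {x : F | x ^ q = x} := by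
    rintro _ ⟨x, rfl⟩
    show (x + x ^ q) ^ q = x + x ^ q
    rw [hadd, ← pow_mul, ← sq, ← hF, FiniteField.pow_card]
    ring
  have hkerset : ((T.ker : AddSubgroup F) : Set F) = {x : F | x ^ q = -x} := by
    ext x
    simp only [AddMonoidHom.mem_ker, SetLike.mem_coe, Set.mem_setOf_eq]
    show x + x ^ q = 0 ↔ _
    constructor <;> intro h <;> linear_combination h
  have e1 : Nat.card F = Nat.card (F ⧸ T.ker) * Nat.card T.ker :=
    AddSubgroup.card_eq_card_quotient_mul_card_addSubgroup T.ker
  have e2 : Nat.card (F ⧸ T.ker) = Nat.card T.range :=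
    Nat.card_congr (QuotientAddGroup.quotientKerEquivRange T).toEquiv
  have e3 : Nat.card T.range = (Set.range T).ncard := by
    rw [← Nat.card_coe_set_eq]
    rfl
  have e4 : Nat.card T.ker = Set.ncard {x : F | x ^ q = -x} := by
    rw [← hkerset, ← Nat.card_coe_set_eq]
    rfl
  have e5 : (Set.range T).ncard ≤ Set.ncard {x : F | x ^ q = x} :=
    Set.ncard_le_ncard hrange (Set.toFinite _)
  have hq2 : Nat.card F = q ^ 2 := by rw [Nat.card_eq_fintype_card, hF]
  have hmain : q * q ≤ Set.ncard {x : F | x ^ q = x} * q := by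
    calc q * q = q ^ 2 := (sq q).symm
    _ = Nat.card (F ⧸ T.ker) * Nat.card T.ker := by rw [← hq2, e1]
    _ = (Set.range T).ncard * Set.ncard {x : F | x ^ q = -x} := by rw [e2, e3, e4]
    _ ≤ Set.ncard {x : F | x ^ q = x} * q := Nat.mul_le_mul e5 hker
  have hlb : q ≤ Set.ncard {x : F | x ^ q = x} :=
    Nat.le_of_mul_le_mul_right hmain (by omega)
  omega

theorem exists_nonfixed (q : ℕ) (hq3 : 3 ≤ q) {F : Type*} [Field F] [Fintype F]
    (hF : Fintype.card F = q ^ 2) : ∃ i : F, i ^ q ≠ i := by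
  by_contra h
  push_neg at h
  have huniv : {x : F | x ^ q = x} = Set.univ := Set.eq_univ_of_forall h
  have h1 : Set.ncard {x : F | x ^ q = x} ≤ q := by
    simpa using card_pow_eq_le q hq3 (1 : F)
  rw [huniv, Set.ncard_univ, Nat.card_eq_fintype_card, hF] at h1
  nlinarith

end Basics

theorem delta_comb (q : ℕ) {F : Type*} [Field F]
    (hadd : ∀ x y : F, (x + y) ^ q = x ^ q + y ^ q)
    (hneg : ∀ x : F, (-x) ^ q = -(x ^ q))
    (hqq : ∀ x : F, (x ^ q) ^ q = x)
    (α β γ δ x y : F) :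
    Deltaf q (fun i => x * (![α, β, β ^ q, α ^ q]) i + y * (![γ, δ, δ ^ q, γ ^ q]) i) =
      (Bf ![α, β, β ^ q, α ^ q] ![γ, δ, δ ^ q, γ ^ q] ^ 2
        - 4 * Qf ![α, β, β ^ q, α ^ q] * Qf ![γ, δ, δ ^ q, γ ^ q])
        * (x * y ^ q - x ^ q * y) ^ 2 := by
  have hmul : ∀ a b : F, (a * b) ^ q = a ^ q * b ^ q := fun a b => mul_pow a b q
  have hsub : ∀ a b : F, (a - b) ^ q = a ^ q - b ^ q := by
    intro a b; rw [sub_eq_add_neg, hadd, hneg, sub_eq_add_neg]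
  have hp1 : ∀ z : F, z ^ (q + 1) = z ^ q * z := fun z => pow_succ z q
  simp only [Deltaf, Hf, Qf, Bf, Matrix.cons_val_zero, Matrix.cons_val_one, Matrix.head_cons,
    Matrix.cons_val_two, Matrix.tail_cons, Matrix.cons_val_three, Matrix.head_fin_const]
  simp only [hp1, hadd, hmul, hsub, hqq]
  ring

theorem sigma_Qf_fix (q : ℕ) {F : Type*} [Field F]
    (hadd : ∀ x y : F, (x + y) ^ q = x ^ q + y ^ q)
    (hneg : ∀ x : F, (-x) ^ q = -(x ^ q))
    (hqq : ∀ x : F, (x ^ q) ^ q = x) (α β : F) :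
    (Qf ![α, β, β ^ q, α ^ q]) ^ q = Qf ![α, β, β ^ q, α ^ q] := by
  have hmul : ∀ a b : F, (a * b) ^ q = a ^ q * b ^ q := fun a b => mul_pow a b q
  have hsub : ∀ a b : F, (a - b) ^ q = a ^ q - b ^ q := by
    intro a b; rw [sub_eq_add_neg, hadd, hneg, sub_eq_add_neg]
  simp only [Qf, Matrix.cons_val_zero, Matrix.cons_val_one, Matrix.head_cons,
    Matrix.cons_val_two, Matrix.tail_cons, Matrix.cons_val_three, Matrix.head_fin_const]
  simp only [hsub, hmul, hqq]
  ring

theorem sigma_Bf_fix (q : ℕ) {F : Type*} [Field F]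
    (hadd : ∀ x y : F, (x + y) ^ q = x ^ q + y ^ q)
    (hneg : ∀ x : F, (-x) ^ q = -(x ^ q))
    (hqq : ∀ x : F, (x ^ q) ^ q = x) (α β γ δ : F) :
    (Bf ![α, β, β ^ q, α ^ q] ![γ, δ, δ ^ q, γ ^ q]) ^ q
      = Bf ![α, β, β ^ q, α ^ q] ![γ, δ, δ ^ q, γ ^ q] := by
  have hmul : ∀ a b : F, (a * b) ^ q = a ^ q * b ^ q := fun a b => mul_pow a b q
  have hsub : ∀ a b : F, (a - b) ^ q = a ^ q - b ^ q := by
    intro a b; rw [sub_eq_add_neg, hadd, hneg, sub_eq_add_neg]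
  simp only [Bf, Matrix.cons_val_zero, Matrix.cons_val_one, Matrix.head_cons,
    Matrix.cons_val_two, Matrix.tail_cons, Matrix.cons_val_three, Matrix.head_fin_const]
  simp only [hsub, hadd, hmul, hqq]
  ring

section Count

variable (q : ℕ) {F : Type*} [Field F] [Fintype F] (u w : Fin 4 → F)

theorem ZS_eq_all (hq3 : 3 ≤ q) (ha : Qf u = 0) (hb : Bf u w = 0) (hc : Qf w = 0) :
    ZS q u w = ((fun s => lineOf q s 1) '' {x : F | x ^ q = x}) ∪ {lineOf q 1 0} := by
  ext L
  constructor
  · rintro ⟨s, t, hs, ht, hst, _, rfl⟩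
    rcases eq_or_ne t 0 with rfl | ht0
    · right
      have hs0 : s ≠ 0 := by simpa using hst
      simp [lineOf_inf q hs hs0]
    · left
      exact ⟨s * t⁻¹, by rw [Set.mem_setOf_eq, mul_pow, inv_pow, hs, ht],
        (lineOf_norm q hs ht ht0).symm⟩
  · rintro (⟨s, hs, rfl⟩ | hL)
    · exact ⟨s, 1, hs, one_pow q, by simp, by rw [Qf_comb, ha, hb, hc]; ring, rfl⟩
    · rw [Set.mem_singleton_iff] at hL
      exact ⟨1, 0, one_pow q, zero_pow (by omega), by simp,
        by rw [Qf_comb, ha, hb, hc]; ring, hL⟩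

theorem count_all (hq3 : 3 ≤ q) (hcard : Set.ncard {x : F | x ^ q = x} = q)
    (ha : Qf u = 0) (hb : Bf u w = 0) (hc : Qf w = 0) :
    tangentCount q u w = q + 1 := by
  classical
  rw [tangentCount_eq_ZS, ZS_eq_all q u w hq3 ha hb hc]
  have hdisj : Disjoint ((fun s => lineOf q s 1) '' {x : F | x ^ q = x})
      ({lineOf q 1 0} : Set (Set (F × F))) := by
    rw [Set.disjoint_singleton_right]
    rintro ⟨s, _, h⟩
    exact lineOf_one_ne_inf q s h
  rw [Set.ncard_union_eq hdisj (Set.toFinite _) (Set.toFinite _),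
    Set.ncard_image_of_injective _ (fun s s' h => lineOf_one_inj q h), hcard,
    Set.ncard_singleton]

theorem count_one (hq3 : 3 ≤ q) (h2 : (2:F) ≠ 0) (h2q : (2:F) ^ q = 2)
    (hneg : ∀ x : F, (-x) ^ q = -(x ^ q))
    (ha : (Qf u) ^ q = Qf u) (hb : (Bf u w) ^ q = Bf u w)
    (habc : ¬(Qf u = 0 ∧ Bf u w = 0 ∧ Qf w = 0))
    (hD : Bf u w ^ 2 = 4 * Qf u * Qf w) :
    tangentCount q u w = 1 := by
  classical
  set a := Qf u with hadef
  set b := Bf u w with hbdef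
  set c := Qf w with hcdef
  rcases eq_or_ne a 0 with ha0 | ha0
  · have hb0 : b = 0 := by
      have h0 : b ^ 2 = 0 := by rw [hD, ha0]; ring
      exact (pow_eq_zero_iff (by norm_num : (2:ℕ) ≠ 0)).1 h0
    have hc0 : c ≠ 0 := fun h => habc ⟨ha0, hb0, h⟩
    have hZS : ZS q u w = {lineOf q 1 0} := by
      ext L
      constructor
      · rintro ⟨s, t, hs, ht, hst, hQ, rfl⟩
        rw [Qf_comb, ← hadef, ← hbdef, ← hcdef, ha0, hb0] at hQ
        have ht0 : t = 0 := by
          have h1 : t ^ 2 * c = 0 := by linear_combination hQ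
          rcases mul_eq_zero.1 h1 with h3 | h3
          · exact (pow_eq_zero_iff (by norm_num : (2:ℕ) ≠ 0)).1 h3
          · exact absurd h3 hc0
        subst ht0
        have hs0 : s ≠ 0 := by simpa using hst
        simp [lineOf_inf q hs hs0]
      · intro hL
        rw [Set.mem_singleton_iff] at hL
        exact ⟨1, 0, one_pow q, zero_pow (by omega), by simp,
          by rw [Qf_comb, ← hadef, ← hbdef, ← hcdef, ha0, hb0]; ring, hL⟩
    rw [tangentCount_eq_ZS, hZS, Set.ncard_singleton]
  · have h2a : (2 : F) * a ≠ 0 := mul_ne_zero h2 ha0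
    set σ : F := -b * ((2:F) * a)⁻¹ with hσdef
    have hσK : σ ^ q = σ := by
      rw [hσdef, mul_pow, hneg, hb, inv_pow, mul_pow, h2q, ha]
    have hZS : ZS q u w = {lineOf q σ 1} := by
      ext L
      constructor
      · rintro ⟨s, t, hs, ht, hst, hQ, rfl⟩
        rw [Qf_comb, ← hadef, ← hbdef, ← hcdef] at hQ
        have ht0 : t ≠ 0 := by
          rintro rfl
          have h1 : s ^ 2 * a = 0 := by linear_combination hQ
          rcases mul_eq_zero.1 h1 with h3 | h3
          · have hs0 : s ≠ 0 := by simpa using hst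
            exact hs0 ((pow_eq_zero_iff (by norm_num : (2:ℕ) ≠ 0)).1 h3)
          · exact ha0 h3
        have hkey : ((2:F) * a * s + b * t) ^ 2 = 0 := by
          linear_combination (4 * a) * hQ + t ^ 2 * hD
        have hkey' : (2:F) * a * s + b * t = 0 :=
          (pow_eq_zero_iff (by norm_num : (2:ℕ) ≠ 0)).1 hkey
        have h1 : s = σ * t := by
          rw [hσdef]
          field_simp
          linear_combination hkey'
        have hst' : s * t⁻¹ = σ := by
          rw [h1, mul_assoc, mul_inv_cancel₀ ht0, mul_one]
        rw [lineOf_norm q hs ht ht0, hst']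
        rfl
      · intro hL
        rw [Set.mem_singleton_iff] at hL
        refine ⟨σ, 1, hσK, one_pow q, by simp, ?_, hL⟩
        rw [Qf_comb, ← hadef, ← hbdef, ← hcdef, hσdef]
        field_simp
        linear_combination -hD
    rw [tangentCount_eq_ZS, hZS, Set.ncard_singleton]

theorem count_disc_ne (hq3 : 3 ≤ q) (h2 : (2:F) ≠ 0) (h2q : (2:F) ^ q = 2)
    (hadd : ∀ x y : F, (x + y) ^ q = x ^ q + y ^ q)
    (hneg : ∀ x : F, (-x) ^ q = -(x ^ q))
    (ha : (Qf u) ^ q = Qf u) (hb : (Bf u w) ^ q = Bf u w) (hc : (Qf w) ^ q = Qf w)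
    (hD : Bf u w ^ 2 ≠ 4 * Qf u * Qf w) :
    tangentCount q u w = 0 ∨ tangentCount q u w = 2 := by
  classical
  set a := Qf u with hadef
  set b := Bf u w with hbdef
  set c := Qf w with hcdef
  by_cases hr : ∃ r : F, r ^ q = r ∧ r ^ 2 = b ^ 2 - 4 * a * c
  · right
    obtain ⟨r, hrK, hr2⟩ := hr
    have hr0 : r ≠ 0 := by
      rintro rfl
      exact hD (by linear_combination -hr2)
    rcases eq_or_ne a 0 with ha0 | ha0
    · have hb0 : b ≠ 0 := by
        rintro hb0
        exact hD (by rw [hb0, ha0]; ring)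
      set σ : F := -c * b⁻¹ with hσdef
      have hσK : σ ^ q = σ := by rw [hσdef, mul_pow, hneg, hc, inv_pow, hb]
      have hZS : ZS q u w = {lineOf q 1 0, lineOf q σ 1} := by
        ext L
        constructor
        · rintro ⟨s, t, hs, ht, hst, hQ, rfl⟩
          rw [Qf_comb, ← hadef, ← hbdef, ← hcdef, ha0] at hQ
          rcases eq_or_ne t 0 with rfl | ht0
          · have hs0 : s ≠ 0 := by simpa using hst
            rw [lineOf_inf q hs hs0]
            exact Set.mem_insert _ _
          · have hfac : t * (s * b + t * c) = 0 := by linear_combination hQ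
            have h1 : s * b + t * c = 0 := by
              rcases mul_eq_zero.1 hfac with h | h
              · exact absurd h ht0
              · exact h
            have h1' : s = σ * t := by
              rw [hσdef]
              field_simp
              linear_combination h1
            have hst' : s * t⁻¹ = σ := by
              rw [h1', mul_assoc, mul_inv_cancel₀ ht0, mul_one]
            rw [lineOf_norm q hs ht ht0, hst']
            exact Set.mem_insert_of_mem _ rfl
        · rintro (rfl | hL)
          · exact ⟨1, 0, one_pow q, zero_pow (by omega), by simp,
              by rw [Qf_comb, ← hadef, ← hbdef, ← hcdef, ha0]; ring, rfl⟩
          · rw [Set.mem_singleton_iff] at hL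
            refine ⟨σ, 1, hσK, one_pow q, by simp, ?_, hL⟩
            rw [Qf_comb, ← hadef, ← hbdef, ← hcdef, ha0, hσdef]
            field_simp
            ring
      have hne : lineOf q 1 0 ≠ lineOf q σ 1 := (lineOf_one_ne_inf q σ).symm
      rw [tangentCount_eq_ZS, hZS, Set.ncard_pair hne]
    · have h2a : (2 : F) * a ≠ 0 := mul_ne_zero h2 ha0
      set σ₁ : F := (-b + r) * ((2:F) * a)⁻¹ with hσ1def
      set σ₂ : F := (-b - r) * ((2:F) * a)⁻¹ with hσ2def
      have hinvK : (((2:F) * a)⁻¹) ^ q = ((2:F) * a)⁻¹ := by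
        rw [inv_pow, mul_pow, h2q, ha]
      have hσ1K : σ₁ ^ q = σ₁ := by
        rw [hσ1def, mul_pow, hinvK, hadd, hneg, hb, hrK]
      have hσ2K : σ₂ ^ q = σ₂ := by
        have hsubq : (-b - r) ^ q = -b - r := by
          rw [sub_eq_add_neg, hadd, hneg, hneg, hb, hrK, ← sub_eq_add_neg]
        rw [hσ2def, mul_pow, hinvK, hsubq]
      have hZS : ZS q u w = {lineOf q σ₁ 1, lineOf q σ₂ 1} := by
        ext L
        constructor
        · rintro ⟨s, t, hs, ht, hst, hQ, rfl⟩
          rw [Qf_comb, ← hadef, ← hbdef, ← hcdef] at hQ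
          have ht0 : t ≠ 0 := by
            rintro rfl
            have h1 : s ^ 2 * a = 0 := by linear_combination hQ
            rcases mul_eq_zero.1 h1 with h3 | h3
            · have hs0 : s ≠ 0 := by simpa using hst
              exact hs0 ((pow_eq_zero_iff (by norm_num : (2:ℕ) ≠ 0)).1 h3)
            · exact ha0 h3
          have hfac : ((2:F) * a * s + b * t - r * t) * ((2:F) * a * s + b * t + r * t) = 0 := by
            linear_combination 4 * a * hQ - t ^ 2 * hr2
          rcases mul_eq_zero.1 hfac with h | h
          · have h1 : s = σ₁ * t := by
              rw [hσ1def]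
              field_simp
              linear_combination h
            have hst' : s * t⁻¹ = σ₁ := by
              rw [h1, mul_assoc, mul_inv_cancel₀ ht0, mul_one]
            rw [lineOf_norm q hs ht ht0, hst']
            exact Set.mem_insert _ _
          · have h1 : s = σ₂ * t := by
              rw [hσ2def]
              field_simp
              linear_combination h
            have hst' : s * t⁻¹ = σ₂ := by
              rw [h1, mul_assoc, mul_inv_cancel₀ ht0, mul_one]
            rw [lineOf_norm q hs ht ht0, hst']
            exact Set.mem_insert_of_mem _ rfl
        · rintro (rfl | hL)
          · refine ⟨σ₁, 1, hσ1K, one_pow q, by simp, ?_, rfl⟩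
            rw [Qf_comb, ← hadef, ← hbdef, ← hcdef, hσ1def]
            field_simp
            linear_combination hr2
          · rw [Set.mem_singleton_iff] at hL
            refine ⟨σ₂, 1, hσ2K, one_pow q, by simp, ?_, hL⟩
            rw [Qf_comb, ← hadef, ← hbdef, ← hcdef, hσ2def]
            field_simp
            linear_combination hr2
      have hne : lineOf q σ₁ 1 ≠ lineOf q σ₂ 1 := by
        intro h
        have hσe := lineOf_one_inj q h
        apply hr0
        rw [hσ1def, hσ2def] at hσe
        have h3 := mul_right_cancel₀ (inv_ne_zero h2a) hσe
        have h4 : (2:F) * r = 0 := by linear_combination h3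
        rcases mul_eq_zero.1 h4 with h5 | h5
        · exact absurd h5 h2
        · exact h5
      rw [tangentCount_eq_ZS, hZS, Set.ncard_pair hne]
  · left
    have ha0 : a ≠ 0 := by
      rintro ha0
      exact hr ⟨b, hb, by rw [ha0]; ring⟩
    have hZS : ZS q u w = ∅ := by
      rw [Set.eq_empty_iff_forall_notMem]
      rintro L ⟨s, t, hs, ht, hst, hQ, rfl⟩
      rw [Qf_comb, ← hadef, ← hbdef, ← hcdef] at hQ
      have ht0 : t ≠ 0 := by
        rintro rfl
        have h1 : s ^ 2 * a = 0 := by linear_combination hQ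
        rcases mul_eq_zero.1 h1 with h3 | h3
        · have hs0 : s ≠ 0 := by simpa using hst
          exact hs0 ((pow_eq_zero_iff (by norm_num : (2:ℕ) ≠ 0)).1 h3)
        · exact ha0 h3
      refine hr ⟨((2:F) * a * s + b * t) * t⁻¹, ?_, ?_⟩
      · rw [mul_pow, inv_pow, ht]
        congr 1
        rw [hadd, mul_pow, mul_pow, mul_pow, h2q, ha, hb, hs, ht]
      · field_simp
        linear_combination 4 * a * hQ
    rw [tangentCount_eq_ZS, hZS, Set.ncard_empty]

end Count

theorem case1 (q : ℕ) {F : Type*} [Field F] [Fintype F]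
    (hq3 : 3 ≤ q) (h2 : (2:F) ≠ 0) (h2q : (2:F) ^ q = 2)
    (hadd : ∀ x y : F, (x + y) ^ q = x ^ q + y ^ q)
    (hneg : ∀ x : F, (-x) ^ q = -(x ^ q))
    (hqq : ∀ x : F, (x ^ q) ^ q = x)
    (hcard : Set.ncard {x : F | x ^ q = x} = q)
    (i : F) (hi : i ^ q ≠ i)
    (α β : F) (hz : (![α, β, β ^ q, α ^ q] : Fin 4 → F) ≠ 0)
    (lam : F) (hlam : lam ≠ 0) (v : Fin 4 → F)
    (hv : v = lam • (![α, β, β ^ q, α ^ q] : Fin 4 → F)) :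
    ∃ u w : Fin 4 → F, IsSigmaVec q u ∧ IsSigmaVec q w ∧
      LinearIndependent F ![u, w] ∧ v ∈ Submodule.span F {u, w} ∧
      (tangentCount q u w = 1 ∨ tangentCount q u w = q + 1) := by
  have hq0 : q ≠ 0 := by omega
  have hsub : ∀ a b : F, (a - b) ^ q = a ^ q - b ^ q := by
    intro a b; rw [sub_eq_add_neg, hadd, hneg, ← sub_eq_add_neg]
  set j : F := i - i ^ q with hjdef
  have hj0 : j ≠ 0 := sub_ne_zero_of_ne (Ne.symm hi)
  have hjq : j ^ q = -j := by rw [hjdef, hsub, hqq]; ring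
  set z : Fin 4 → F := ![α, β, β ^ q, α ^ q] with hzdef
  have finish : ∀ w' : Fin 4 → F, IsSigmaVec q w' → Bf z w' = 0 → Qf w' = 0 →
      LinearIndependent F ![z, w'] →
      ∃ u w : Fin 4 → F, IsSigmaVec q u ∧ IsSigmaVec q w ∧
        LinearIndependent F ![u, w] ∧ v ∈ Submodule.span F {u, w} ∧
        (tangentCount q u w = 1 ∨ tangentCount q u w = q + 1) := by
    intro w' hwσ hb0 hc0 hind
    refine ⟨z, w', ⟨hz, α, β, rfl⟩, hwσ, hind, ?_, ?_⟩
    · exact Submodule.mem_span_pair.2 ⟨lam, 0, by rw [hv]; simp⟩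
    · rcases eq_or_ne (Qf z) 0 with haz | haz
      · right
        exact count_all q z w' hq3 hcard haz hb0 hc0
      · left
        refine count_one q z w' hq3 h2 h2q hneg ?_ ?_ (fun h => haz h.1) ?_
        · rw [hzdef]
          exact sigma_Qf_fix q hadd hneg hqq α β
        · rw [hb0]
          exact zero_pow hq0
        · rw [hb0, hc0]
          ring
  by_cases hm : α ^ q - β = 0
  · -- tangent-plane construction in the degenerate case β = α^q
    have hβ : β = α ^ q := by linear_combination -hm
    have hα : α ≠ 0 := by
      intro h0
      apply hz
      funext idx
      fin_cases idx <;> simp [hzdef, h0, hβ, zero_pow hq0]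
    have hαq : α ^ q ≠ 0 := pow_ne_zero q hα
    have h2α : (2:F) * α ^ q ≠ 0 := mul_ne_zero h2 hαq
    set γ : F := j * ((2:F) * α ^ q)⁻¹ with hγdef
    have hγ0 : γ ≠ 0 := mul_ne_zero hj0 (inv_ne_zero h2α)
    have hγq : γ ^ q = -j * ((2:F) * α)⁻¹ := by
      rw [hγdef, mul_pow, hjq, inv_pow, mul_pow, h2q, hqq]
    set w' : Fin 4 → F := ![γ, -γ ^ q, -γ, γ ^ q] with hwdef
    have hw'0 : w' ≠ 0 := by
      intro h
      apply hγ0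
      have h0 := congr_fun h 0
      simpa [hwdef] using h0
    have hwσ : IsSigmaVec q w' := by
      refine ⟨hw'0, γ, -γ ^ q, ?_⟩
      rw [hwdef, hneg, hqq]
    have hββ : β ^ q = α := by rw [hβ, hqq]
    have hb0 : Bf z w' = 0 := by
      simp only [Bf, hzdef, hwdef, Matrix.cons_val_zero, Matrix.cons_val_one, Matrix.head_cons,
        Matrix.cons_val_two, Matrix.tail_cons, Matrix.cons_val_three, Matrix.head_fin_const]
      rw [hβ, hqq, hγq, hγdef]
      field_simp
      ring
    have hc0 : Qf w' = 0 := by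
      simp only [Qf, hwdef, Matrix.cons_val_zero, Matrix.cons_val_one, Matrix.head_cons,
        Matrix.cons_val_two, Matrix.tail_cons, Matrix.cons_val_three, Matrix.head_fin_const]
      ring
    refine finish w' hwσ hb0 hc0 ?_
    rw [LinearIndependent.pair_iff]
    intro s t hst
    have h0 := congr_fun hst 0
    have h4 := congr_fun hst 2
    simp only [hzdef, hwdef, Pi.add_apply, Pi.smul_apply, smul_eq_mul, Matrix.cons_val_zero,
      Matrix.cons_val_two, Matrix.tail_cons, Matrix.head_cons, Pi.zero_apply] at h0 h4
    rw [hββ] at h4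
    have hs0 : s = 0 := by
      have h5 : (2:F) * (s * α) = 0 := by linear_combination h0 + h4
      rcases mul_eq_zero.1 h5 with h6 | h6
      · exact absurd h6 h2
      · rcases mul_eq_zero.1 h6 with h7 | h7
        · exact h7
        · exact absurd h7 hα
    refine ⟨hs0, ?_⟩
    rw [hs0, zero_mul, zero_add] at h0
    rcases mul_eq_zero.1 h0 with h7 | h7
    · exact h7
    · exact absurd h7 hγ0
  · -- generic construction on the quadric
    have hmq : (α ^ q - β) ^ q = α - β ^ q := by rw [hsub, hqq]
    have hmq0 : α - β ^ q ≠ 0 := by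
      rw [← hmq]
      exact pow_ne_zero q hm
    set γ : F := j * (α ^ q - β)⁻¹ with hγdef
    have hγ0 : γ ≠ 0 := mul_ne_zero hj0 (inv_ne_zero hm)
    have hγq : γ ^ q = -j * (α - β ^ q)⁻¹ := by
      rw [hγdef, mul_pow, hjq, inv_pow, hmq]
    set w' : Fin 4 → F := ![γ, γ ^ q, γ, γ ^ q] with hwdef
    have hw'0 : w' ≠ 0 := by
      intro h
      apply hγ0
      have h0 := congr_fun h 0
      simpa [hwdef] using h0
    have hwσ : IsSigmaVec q w' := by
      refine ⟨hw'0, γ, γ ^ q, ?_⟩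
      rw [hwdef, hqq]
    have hb0 : Bf z w' = 0 := by
      simp only [Bf, hzdef, hwdef, Matrix.cons_val_zero, Matrix.cons_val_one, Matrix.head_cons,
        Matrix.cons_val_two, Matrix.tail_cons, Matrix.cons_val_three, Matrix.head_fin_const]
      rw [hγq, hγdef]
      field_simp
      ring
    have hc0 : Qf w' = 0 := by
      simp only [Qf, hwdef, Matrix.cons_val_zero, Matrix.cons_val_one, Matrix.head_cons,
        Matrix.cons_val_two, Matrix.tail_cons, Matrix.cons_val_three, Matrix.head_fin_const]
      ring
    refine finish w' hwσ hb0 hc0 ?_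
    rw [LinearIndependent.pair_iff]
    intro s t hst
    have h0 := congr_fun hst 0
    have h4 := congr_fun hst 2
    simp only [hzdef, hwdef, Pi.add_apply, Pi.smul_apply, smul_eq_mul, Matrix.cons_val_zero,
      Matrix.cons_val_two, Matrix.tail_cons, Matrix.head_cons, Pi.zero_apply] at h0 h4
    have hs0 : s = 0 := by
      have h5 : s * (α - β ^ q) = 0 := by linear_combination h0 - h4
      rcases mul_eq_zero.1 h5 with h6 | h6
      · exact h6
      · exact absurd h6 hmq0
    refine ⟨hs0, ?_⟩
    rw [hs0, zero_mul, zero_add] at h0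
    rcases mul_eq_zero.1 h0 with h7 | h7
    · exact h7
    · exact absurd h7 hγ0

/-- `Δ(v) = 0` iff `v` lies on an extended tangent line or an extended generator of the
subquadric `Q₀` of the Baer subgeometry `Σ`. -/
theorem stmt6 (q : ℕ) (hq : ∃ p k : ℕ, p.Prime ∧ 0 < k ∧ q = p ^ k) (hodd : Odd q)
    (F : Type*) [Field F] [Fintype F] (hF : Fintype.card F = q ^ 2)
    (v : Fin 4 → F) (hv : v ≠ 0) :
    Deltaf q v = 0 ↔
      ∃ u w : Fin 4 → F, IsSigmaVec q u ∧ IsSigmaVec q w ∧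
        LinearIndependent F ![u, w] ∧
        v ∈ Submodule.span F {u, w} ∧
        (tangentCount q u w = 1 ∨ tangentCount q u w = q + 1) := by
  obtain ⟨hadd, h2, hq3⟩ := basics q hq hodd F hF
  have hqq : ∀ x : F, (x ^ q) ^ q = x := qq_fix q hF
  have hneg : ∀ x : F, (-x) ^ q = -(x ^ q) := fun x => Odd.neg_pow hodd x
  have h2q : (2:F) ^ q = 2 := by
    have h := hadd 1 1
    rw [one_pow, one_add_one_eq_two] at h
    exact h
  have hsub : ∀ a b : F, (a - b) ^ q = a ^ q - b ^ q := by
    intro a b; rw [sub_eq_add_neg, hadd, hneg, ← sub_eq_add_neg]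
  have hcard := card_K q hq3 hF hadd
  obtain ⟨i, hi⟩ := exists_nonfixed q hq3 hF
  have hd0 : i - i ^ q ≠ 0 := sub_ne_zero_of_ne (Ne.symm hi)
  have hd0' : i ^ q - i ≠ 0 := sub_ne_zero_of_ne hi
  set C : F := (v 0 - (v 3) ^ q) * (i - i ^ q)⁻¹ with hCdef
  set A : F := v 0 - i * C with hAdef
  set D : F := (v 1 - (v 2) ^ q) * (i - i ^ q)⁻¹ with hDdef
  set B : F := v 1 - i * D with hBdef
  have hCq : C ^ q = ((v 0) ^ q - v 3) * (i ^ q - i)⁻¹ := by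
    rw [hCdef, mul_pow, hsub, hqq, inv_pow, hsub, hqq]
  have hDq : D ^ q = ((v 1) ^ q - v 2) * (i ^ q - i)⁻¹ := by
    rw [hDdef, mul_pow, hsub, hqq, inv_pow, hsub, hqq]
  have hAq : A ^ q = (v 0) ^ q - i ^ q * C ^ q := by
    rw [hAdef, hsub, mul_pow]
  have hBq : B ^ q = (v 1) ^ q - i ^ q * D ^ q := by
    rw [hBdef, hsub, mul_pow]
  have hdec : ∀ idx : Fin 4,
      v idx = (![A, B, B ^ q, A ^ q] : Fin 4 → F) idx + i * (![C, D, D ^ q, C ^ q]) idx := by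
    intro idx
    fin_cases idx
    · show v 0 = A + i * C
      rw [hAdef]; ring
    · show v 1 = B + i * D
      rw [hBdef]; ring
    · show v 2 = B ^ q + i * D ^ q
      rw [hBq, hDq]
      field_simp
      ring
    · show v 3 = A ^ q + i * C ^ q
      rw [hAq, hCq]
      field_simp
      ring
  constructor
  · intro hΔ
    by_cases hw00 : (![C, D, D ^ q, C ^ q] : Fin 4 → F) = 0
    · have hveq : v = (1:F) • (![A, B, B ^ q, A ^ q] : Fin 4 → F) := by
        funext idx
        rw [hdec idx, hw00]
        simp
      have hz : (![A, B, B ^ q, A ^ q] : Fin 4 → F) ≠ 0 := by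
        intro h
        apply hv
        rw [hveq, h, smul_zero]
      exact case1 q hq3 h2 h2q hadd hneg hqq hcard i hi A B hz 1 one_ne_zero v hveq
    · by_cases hdep : ∃ μ : F, (![A, B, B ^ q, A ^ q] : Fin 4 → F) = μ • ![C, D, D ^ q, C ^ q]
      · obtain ⟨μ, hμ⟩ := hdep
        have hveq : v = (μ + i) • (![C, D, D ^ q, C ^ q] : Fin 4 → F) := by
          funext idx
          rw [hdec idx, hμ]
          simp only [Pi.smul_apply, smul_eq_mul]
          ring
        have hlam : μ + i ≠ 0 := by
          intro h0
          apply hv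
          rw [hveq, h0, zero_smul]
        exact case1 q hq3 h2 h2q hadd hneg hqq hcard i hi C D hw00 (μ + i) hlam v hveq
      · have hind : LinearIndependent F
            ![(![A, B, B ^ q, A ^ q] : Fin 4 → F), ![C, D, D ^ q, C ^ q]] := by
          rw [LinearIndependent.pair_iff]
          intro s t hst
          by_cases hs0 : s = 0
          · refine ⟨hs0, ?_⟩
            rw [hs0, zero_smul, zero_add] at hst
            rcases smul_eq_zero.1 hst with h | h
            · exact h
            · exact absurd h hw00
          · exfalso
            apply hdep
            have h1 : s • (![A, B, B ^ q, A ^ q] : Fin 4 → F) = -(t • ![C, D, D ^ q, C ^ q]) :=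
              eq_neg_of_add_eq_zero_left hst
            refine ⟨s⁻¹ * -t, ?_⟩
            calc (![A, B, B ^ q, A ^ q] : Fin 4 → F)
                = s⁻¹ • (s • (![A, B, B ^ q, A ^ q] : Fin 4 → F)) := by
                  rw [smul_smul, inv_mul_cancel₀ hs0, one_smul]
              _ = s⁻¹ • (-(t • (![C, D, D ^ q, C ^ q] : Fin 4 → F))) := by rw [h1]
              _ = (s⁻¹ * -t) • (![C, D, D ^ q, C ^ q] : Fin 4 → F) := by
                  rw [← smul_smul, neg_smul, smul_neg]
        have hz : (![A, B, B ^ q, A ^ q] : Fin 4 → F) ≠ 0 := by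
          intro h
          exact hdep ⟨0, by rw [h, zero_smul]⟩
        have hveq : v = fun idx => 1 * (![A, B, B ^ q, A ^ q] : Fin 4 → F) idx
            + i * (![C, D, D ^ q, C ^ q] : Fin 4 → F) idx := by
          funext idx
          rw [hdec idx]
          ring
        rw [hveq, delta_comb q hadd hneg hqq] at hΔ
        have hD0 : Bf ![A, B, B ^ q, A ^ q] ![C, D, D ^ q, C ^ q] ^ 2
            - 4 * Qf ![A, B, B ^ q, A ^ q] * Qf ![C, D, D ^ q, C ^ q] = 0 := by
          rcases mul_eq_zero.1 hΔ with h | h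
          · exact h
          · exfalso
            have h5 := (pow_eq_zero_iff (by norm_num : (2:ℕ) ≠ 0)).1 h
            apply hd0'
            linear_combination h5
        refine ⟨![A, B, B ^ q, A ^ q], ![C, D, D ^ q, C ^ q], ⟨hz, A, B, rfl⟩,
          ⟨hw00, C, D, rfl⟩, hind, ?_, ?_⟩
        · refine Submodule.mem_span_pair.2 ⟨1, i, ?_⟩
          funext idx
          rw [hdec idx]
          simp only [Pi.add_apply, Pi.smul_apply, smul_eq_mul]
          ring
        · by_cases habc : Qf (![A, B, B ^ q, A ^ q] : Fin 4 → F) = 0 ∧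
              Bf ![A, B, B ^ q, A ^ q] ![C, D, D ^ q, C ^ q] = 0 ∧
              Qf (![C, D, D ^ q, C ^ q] : Fin 4 → F) = 0
          · right
            exact count_all q _ _ hq3 hcard habc.1 habc.2.1 habc.2.2
          · left
            exact count_one q _ _ hq3 h2 h2q hneg (sigma_Qf_fix q hadd hneg hqq A B)
              (sigma_Bf_fix q hadd hneg hqq A B C D) habc (by linear_combination hD0)
  · rintro ⟨u, w, hu, hw, hind, hspan, hcount⟩
    obtain ⟨hu0, α, β, rfl⟩ := hu
    obtain ⟨hw0, γ, δ, rfl⟩ := hw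
    have hD0 : Bf ![α, β, β ^ q, α ^ q] ![γ, δ, δ ^ q, γ ^ q] ^ 2
        = 4 * Qf ![α, β, β ^ q, α ^ q] * Qf ![γ, δ, δ ^ q, γ ^ q] := by
      by_contra hD'
      rcases count_disc_ne q _ _ hq3 h2 h2q hadd hneg (sigma_Qf_fix q hadd hneg hqq α β)
        (sigma_Bf_fix q hadd hneg hqq α β γ δ) (sigma_Qf_fix q hadd hneg hqq γ δ) hD' with h | h <;>
        rcases hcount with h1 | h1 <;> omega
    obtain ⟨x, y, hxy⟩ := Submodule.mem_span_pair.1 hspan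
    have hveq : v = fun idx => x * (![α, β, β ^ q, α ^ q] : Fin 4 → F) idx
        + y * (![γ, δ, δ ^ q, γ ^ q] : Fin 4 → F) idx := by
      funext idx
      rw [← hxy]
      simp only [Pi.add_apply, Pi.smul_apply, smul_eq_mul]
    rw [hveq, delta_comb q hadd hneg hqq]
    rw [show Bf ![α, β, β ^ q, α ^ q] ![γ, δ, δ ^ q, γ ^ q] ^ 2
        - 4 * Qf ![α, β, β ^ q, α ^ q] * Qf ![γ, δ, δ ^ q, γ ^ q] = 0 from by
      linear_combination hD0]
    exact zero_mul _
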